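/- arXiv:1604.02158 — 2 statements merged into one kernel-verified Lean document; each statement's English description precedes it below -/
import Mathlib

section
/- Let X follow a Student t distribution with n > 1 degrees of freedom. There exist numerical constants 0 < c₁ < c₂ such that for any x ≥ 1, c₁ n^{−1/2} (1 + x²/n)^{−n/2} ≤ P(|X| > x) ≤ c₂ (1 + x²/n)^{−n/2}. In particular, for any u ≥ 1, c₁ n^{−1/2} e^{−u/2} ≤ P( n log(1 + X²/n) ≥ u ) ≤ c₂ e^{−u/2}. -/
open MeasureTheory Real

/-- The Student `t` distribution with `n` degrees of freedom, defined through its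
density `Γ((n+1)/2) / (√(nπ) Γ(n/2)) (1 + x²/n)^{-(n+1)/2}`. -/
noncomputable def studentT (n : ℝ) : Measure ℝ :=
  volume.withDensity fun x =>
    ENNReal.ofReal (Real.Gamma ((n + 1) / 2) /
      (Real.sqrt (n * Real.pi) * Real.Gamma (n / 2)) *
      (1 + x ^ 2 / n) ^ (-((n + 1) / 2)))

open Set Filter Topology


lemma gamma_sq {x : ℝ} (hx : 0 < x) :
    Gamma (x + 1/2) ^ 2 ≤ Gamma x * Gamma (x + 1) := by
  have h := convexOn_log_Gamma.2 (mem_Ioi.2 hx) (mem_Ioi.2 (by linarith : (0:ℝ) < x + 1))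
    (by norm_num : (0:ℝ) ≤ 1/2) (by norm_num : (0:ℝ) ≤ 1/2) (by norm_num)
  simp only [Function.comp_apply, smul_eq_mul] at h
  have hmid : 1/2 * x + 1/2 * (x + 1) = x + 1/2 := by ring
  rw [hmid] at h
  have h1 : (0:ℝ) < Gamma x := Gamma_pos_of_pos hx
  have h2 : (0:ℝ) < Gamma (x + 1) := Gamma_pos_of_pos (by linarith)
  have h3 : (0:ℝ) < Gamma (x + 1/2) := Gamma_pos_of_pos (by linarith)
  have := Real.exp_le_exp.2 (by linarith : 2 * Real.log (Gamma (x+1/2)) ≤ Real.log (Gamma x) + Real.log (Gamma (x+1)))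
  rw [Real.exp_add, Real.exp_log h1, Real.exp_log h2, mul_comm 2, Real.exp_mul, Real.exp_log h3] at this
  calc Gamma (x + 1/2) ^ 2 = Gamma (x+1/2) ^ (2:ℝ) := by rw [← Real.rpow_natCast]; norm_num
  _ ≤ _ := this

private lemma sq_le_imp {a b : ℝ} (ha : 0 ≤ a) (hb : 0 ≤ b) (h : a^2 ≤ b^2) : a ≤ b := by
  nlinarith

lemma gamma_upper {x : ℝ} (hx : 0 < x) : Gamma (x + 1/2) ≤ Real.sqrt x * Gamma x := by
  have h1 : (0:ℝ) < Gamma x := Gamma_pos_of_pos hx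
  have h3 : (0:ℝ) ≤ Gamma (x + 1/2) := (Gamma_pos_of_pos (by linarith)).le
  have h := gamma_sq hx
  rw [Gamma_add_one hx.ne'] at h
  refine sq_le_imp h3 (by positivity) ?_
  rw [mul_pow, Real.sq_sqrt hx.le]; nlinarith

lemma gamma_lower {x : ℝ} (hx : 0 < x) :
    x * Gamma x ≤ Real.sqrt (x + 1/2) * Gamma (x + 1/2) := by
  have h1 : (0:ℝ) < Gamma x := Gamma_pos_of_pos hx
  have h3 : (0:ℝ) < Gamma (x + 1/2) := Gamma_pos_of_pos (by linarith)
  have h := gamma_sq (by linarith : (0:ℝ) < x + 1/2)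
  have e1 : x + 1/2 + 1/2 = x + 1 := by ring
  have e2 : Gamma (x + 1/2 + 1) = (x + 1/2) * Gamma (x + 1/2) := Gamma_add_one (by linarith)
  rw [e1, e2, Gamma_add_one hx.ne'] at h
  have hs : Real.sqrt (x+1/2)^2 = x + 1/2 := Real.sq_sqrt (by linarith)
  refine sq_le_imp (by positivity) (by positivity) ?_
  rw [mul_pow, mul_pow, hs]; nlinarith

noncomputable def Cc (d : ℝ) : ℝ := Gamma ((d+1)/2) / (Real.sqrt (d*π) * Gamma (d/2))

lemma Cc_le_half {d : ℝ} (hd : 2 ≤ d) : Cc d ≤ 1/2 := by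
  have hx : (0:ℝ) < d/2 := by linarith
  have hg : (0:ℝ) < Gamma (d/2) := Gamma_pos_of_pos hx
  have hS : (0:ℝ) < Real.sqrt (d*π) := Real.sqrt_pos.2 (by positivity)
  have hgu := gamma_upper hx
  have he : (d+1)/2 = d/2 + 1/2 := by ring
  have key : 2 * Real.sqrt (d/2) ≤ Real.sqrt (d*π) := by
    have h1 : (2 * Real.sqrt (d/2))^2 ≤ d*π := by
      rw [mul_pow, Real.sq_sqrt (by linarith)]
      nlinarith [pi_gt_three]
    calc 2 * Real.sqrt (d/2) = Real.sqrt ((2*Real.sqrt (d/2))^2) :=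
          (Real.sqrt_sq (by positivity)).symm
    _ ≤ _ := Real.sqrt_le_sqrt h1
  rw [Cc, he, div_le_iff₀ (by positivity)]
  nlinarith [mul_le_mul_of_nonneg_right key hg.le, Real.sqrt_nonneg (d/2),
    Gamma_pos_of_pos (by linarith : (0:ℝ) < d/2 + 1/2)]

lemma quarter_le_Cc {d : ℝ} (hd : 2 ≤ d) : 1/4 ≤ Cc d := by
  have hx : (0:ℝ) < d/2 := by linarith
  have hg : (0:ℝ) < Gamma (d/2) := Gamma_pos_of_pos hx
  have hS : (0:ℝ) < Real.sqrt (d*π) := Real.sqrt_pos.2 (by positivity)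
  have hsx : (0:ℝ) < Real.sqrt (d/2 + 1/2) := Real.sqrt_pos.2 (by linarith)
  have key : Real.sqrt (d*π) * Real.sqrt (d/2 + 1/2) ≤ 4 * (d/2) := by
    rw [← Real.sqrt_mul (by positivity)]
    have h1 : d*π*(d/2+1/2) ≤ (4*(d/2))^2 := by nlinarith [pi_le_four, pi_pos]
    calc Real.sqrt (d*π*(d/2+1/2)) ≤ Real.sqrt ((4*(d/2))^2) := Real.sqrt_le_sqrt h1
    _ = 4*(d/2) := Real.sqrt_sq (by linarith)
  have hgl := gamma_lower hx
  have he : (d+1)/2 = d/2 + 1/2 := by ring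
  rw [Cc, he, le_div_iff₀ (by positivity)]
  have hg2 : (0:ℝ) < Gamma (d/2 + 1/2) := Gamma_pos_of_pos (by linarith)
  nlinarith [mul_le_mul_of_nonneg_left hgl hS.le,
    mul_le_mul_of_nonneg_right key hg2.le]

lemma base_pos {d : ℝ} (hd : 2 ≤ d) (y : ℝ) : 0 < 1 + y^2/d := by positivity

lemma cont_h {d e : ℝ} (hd : 2 ≤ d) : Continuous fun y : ℝ => (1 + y^2/d) ^ e :=
  (continuous_const.add ((continuous_pow 2).div_const d)).rpow_const
    (fun y => Or.inl (base_pos hd y).ne')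

lemma h_int {d x : ℝ} (hd : 2 ≤ d) (hx : 1 ≤ x) :
    IntegrableOn (fun y => (1 + y^2/d) ^ (-((d+1)/2))) (Ioi x) := by
  have hd0 : (0:ℝ) < d := by linarith
  have hx0 : (0:ℝ) < x := by linarith
  refine Integrable.mono
    (g := fun y => d ^ ((3:ℝ)/2) * y ^ (-(3:ℝ)))
    (((integrableOn_Ioi_rpow_of_lt (by norm_num) hx0).const_mul _))
    ((cont_h hd).aestronglyMeasurable.restrict) ?_
  filter_upwards [ae_restrict_mem measurableSet_Ioi] with y hy
  have hy0 : (0:ℝ) < y := lt_of_lt_of_le hx0 (le_of_lt hy)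
  have hb := base_pos hd y
  rw [Real.norm_eq_abs, Real.norm_eq_abs, abs_of_nonneg (Real.rpow_nonneg hb.le _),
    abs_of_nonneg (by positivity)]
  have s1 : (1 + y^2/d) ^ (-((d+1)/2)) ≤ (1 + y^2/d) ^ (-(3/2) : ℝ) :=
    Real.rpow_le_rpow_of_exponent_le (le_add_of_nonneg_right (by positivity)) (by linarith)
  have s2 : (1 + y^2/d) ^ (-(3/2) : ℝ) ≤ (y^2/d) ^ (-(3/2) : ℝ) :=
    Real.rpow_le_rpow_of_nonpos (by positivity) (by linarith) (by norm_num)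
  have s3 : (y^2/d) ^ (-(3/2) : ℝ) = d ^ ((3:ℝ)/2) * y ^ (-(3:ℝ)) := by
    rw [Real.div_rpow (sq_nonneg y) hd0.le, ← Real.rpow_natCast y 2,
      ← Real.rpow_mul hy0.le, Real.rpow_neg hd0.le]
    rw [div_eq_mul_inv, inv_inv, mul_comm]
    norm_num
  linarith [s1, s2, s3.le, s3.ge]
lemma deriv_F {d : ℝ} (hd : 2 ≤ d) (y : ℝ) :
    HasDerivAt (fun y : ℝ => -(d/(d-1)) * (1 + y^2/d) ^ (-((d-1)/2)))
      (y * (1 + y^2/d) ^ (-((d+1)/2))) y := by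
  have hd0 : (0:ℝ) < d := by linarith
  have hb := base_pos hd y
  have h1 : HasDerivAt (fun y : ℝ => 1 + y^2/d) (2*y/d) y := by
    have h := (hasDerivAt_pow 2 y).div_const d
    simpa using h.const_add 1
  have h2 := (h1.rpow_const (p := -((d-1)/2)) (Or.inl hb.ne'))
  have h3 := h2.const_mul (-(d/(d-1)))
  refine h3.congr_deriv ?_
  have he : -((d-1)/2) - 1 = -((d+1)/2) := by ring
  rw [he]
  have h10 : d - 1 ≠ 0 := by linarith
  generalize (1 + y^2/d) ^ (-((d+1)/2)) = B
  field_simp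

lemma yh_integral {d x : ℝ} (hd : 2 ≤ d) (hx : 1 ≤ x) :
    IntegrableOn (fun y => y * (1 + y^2/d) ^ (-((d+1)/2))) (Ioi x) ∧
    ∫ y in Ioi x, y * (1 + y^2/d) ^ (-((d+1)/2)) =
      (d/(d-1)) * (1 + x^2/d) ^ (-((d-1)/2)) := by
  have hd0 : (0:ℝ) < d := by linarith
  have hderiv : ∀ y ∈ Ici x, HasDerivAt (fun y : ℝ => -(d/(d-1)) * (1 + y^2/d) ^ (-((d-1)/2)))
      (y * (1 + y^2/d) ^ (-((d+1)/2))) y := fun y _ => deriv_F hd y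
  have hpos : ∀ y ∈ Ioi x, 0 ≤ y * (1 + y^2/d) ^ (-((d+1)/2)) := by
    intro y hy
    have : (0:ℝ) < y := by have := hy.out; linarith
    positivity
  have htend : Tendsto (fun y : ℝ => -(d/(d-1)) * (1 + y^2/d) ^ (-((d-1)/2))) atTop (𝓝 0) := by
    have hbt : Tendsto (fun y : ℝ => 1 + y^2/d) atTop atTop :=
      tendsto_atTop_add_const_left _ 1 ((tendsto_pow_atTop two_ne_zero).atTop_div_const hd0)
    have h0 : Tendsto (fun y : ℝ => (1 + y^2/d) ^ (-((d-1)/2))) atTop (𝓝 0) :=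
      (tendsto_rpow_neg_atTop (by linarith : (0:ℝ) < (d-1)/2)).comp hbt
    simpa using h0.const_mul (-(d/(d-1)))
  constructor
  · exact integrableOn_Ioi_deriv_of_nonneg' hderiv hpos htend
  · rw [integral_Ioi_of_hasDerivAt_of_nonneg' hderiv hpos htend]
    ring
lemma integral_upper {d x : ℝ} (hd : 2 ≤ d) (hx : 1 ≤ x) :
    ∫ y in Ioi x, (1 + y^2/d) ^ (-((d+1)/2)) ≤
      (d/(d-1)) * x⁻¹ * (1 + x^2/d) ^ (-((d-1)/2)) := by
  have hx0 : (0:ℝ) < x := by linarith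
  obtain ⟨hint, heq⟩ := yh_integral hd hx
  have step : ∫ y in Ioi x, (1 + y^2/d) ^ (-((d+1)/2)) ≤
      ∫ y in Ioi x, x⁻¹ * (y * (1 + y^2/d) ^ (-((d+1)/2))) := by
    refine setIntegral_mono_on (h_int hd hx) (hint.const_mul _) measurableSet_Ioi ?_
    intro y hy
    have hy1 : x ≤ y := (le_of_lt hy)
    have hb : (0:ℝ) ≤ (1 + y^2/d) ^ (-((d+1)/2)) := Real.rpow_nonneg (base_pos hd y).le _
    have h1 : 1 ≤ x⁻¹ * y := by
      rw [← div_eq_inv_mul, le_div_iff₀ hx0]; linarith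
    calc (1 + y^2/d) ^ (-((d+1)/2)) = 1 * (1 + y^2/d) ^ (-((d+1)/2)) := (one_mul _).symm
    _ ≤ (x⁻¹ * y) * (1 + y^2/d) ^ (-((d+1)/2)) := mul_le_mul_of_nonneg_right h1 hb
    _ = x⁻¹ * (y * (1 + y^2/d) ^ (-((d+1)/2))) := by ring
  rw [integral_const_mul, heq] at step
  calc ∫ y in Ioi x, (1 + y^2/d) ^ (-((d+1)/2)) ≤
      x⁻¹ * ((d/(d-1)) * (1 + x^2/d) ^ (-((d-1)/2))) := step
  _ = (d/(d-1)) * x⁻¹ * (1 + x^2/d) ^ (-((d-1)/2)) := by ring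

lemma integral_lower {d x : ℝ} (hd : 2 ≤ d) (hx : 1 ≤ x) :
    Real.exp (-(3/2)) * (Real.sqrt d / (d+1)) * (1 + x^2/d) ^ (-(d/2)) ≤
      ∫ y in Ioi x, (1 + y^2/d) ^ (-((d+1)/2)) := by
  have hd0 : (0:ℝ) < d := by linarith
  have hd1 : (0:ℝ) < d + 1 := by linarith
  have hx0 : (0:ℝ) < x := by linarith
  set δ : ℝ := (d + x^2)/((d+1)*x) with hδ
  have hδ0 : 0 < δ := by rw [hδ]; positivity
  have hAeq : 2*x*δ*(d+1) = 2*(d+x^2) := by rw [hδ]; field_simp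
  have hB' : δ^2*(d+1) ≤ d+x^2 := by
    have hx21 : (0:ℝ) ≤ x^2 - 1 := by nlinarith
    have key : (0:ℝ) ≤ (d+x^2)*(d+1)*(d*(x^2-1)) := by positivity
    rw [hδ, div_pow]
    rw [div_mul_eq_mul_div, div_le_iff₀ (by positivity)]
    nlinarith [key]
  have hδd1 : δ * (d+1) = (d + x^2)/x := by rw [hδ]; field_simp
  clear_value δ
  clear hδ
  have hbx : (0:ℝ) < 1 + x^2/d := base_pos hd x
  have hbxδ : (0:ℝ) < 1 + (x+δ)^2/d := base_pos hd (x+δ)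
  have hIoc : IntegrableOn (fun y => (1 + y^2/d) ^ (-((d+1)/2))) (Ioc x (x+δ)) :=
    (h_int hd hx).mono_set Ioc_subset_Ioi_self
  -- step 1 : δ * h(x+δ) ≤ ∫ over Ioc
  have step1 : δ * (1 + (x+δ)^2/d) ^ (-((d+1)/2)) ≤
      ∫ y in Ioc x (x+δ), (1 + y^2/d) ^ (-((d+1)/2)) := by
    have hconst : ∫ _y in Ioc x (x+δ), ((1 + (x+δ)^2/d) ^ (-((d+1)/2)) : ℝ) =
        δ * (1 + (x+δ)^2/d) ^ (-((d+1)/2)) := by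
      rw [setIntegral_const, Real.volume_real_Ioc_of_le (by linarith), smul_eq_mul]
      ring_nf
    rw [← hconst]
    refine setIntegral_mono_on
      (integrableOn_const (by rw [Real.volume_Ioc]; exact ENNReal.ofReal_ne_top))
      hIoc measurableSet_Ioc ?_
    intro y hy
    have h1 : (0:ℝ) < y := lt_trans hx0 hy.1
    have h2 : 1 + y^2/d ≤ 1 + (x+δ)^2/d := by
      have h3 : (0:ℝ) ≤ x + δ + y := by linarith
      have hsq : y^2 ≤ (x+δ)^2 := by
        nlinarith [mul_nonneg (sub_nonneg.2 hy.2) h3]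
      gcongr
    exact Real.rpow_le_rpow_of_nonpos (base_pos hd y) h2 (by linarith)
  -- step 2 : ∫ over Ioc ≤ ∫ over Ioi
  have step2 : ∫ y in Ioc x (x+δ), (1 + y^2/d) ^ (-((d+1)/2)) ≤
      ∫ y in Ioi x, (1 + y^2/d) ^ (-((d+1)/2)) := by
    refine setIntegral_mono_set (h_int hd hx)
      (Eventually.of_forall fun y => Real.rpow_nonneg (base_pos hd y).le _)
      (HasSubset.Subset.eventuallyLE Ioc_subset_Ioi_self)
  -- step 3 : h(x+δ) ≥ exp(-3/2) h(x)
  have hratio' : ((x+δ)^2 - x^2) * (d+1) ≤ 3*(d+x^2) := by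
    nlinarith [hAeq, hB']
  have hratio : 1 + (x+δ)^2/d ≤ (1 + 3/(d+1)) * (1 + x^2/d) := by
    have hg1 : ∀ a:ℝ, 1 + a/d = (d+a)/d := fun a => by rw [add_div, div_self hd0.ne']
    have hg2 : (1:ℝ) + 3/(d+1) = (d+4)/(d+1) := by
      rw [show (d:ℝ)+4 = (d+1)+3 by ring, add_div, div_self hd1.ne']
    rw [hg1, hg1, hg2, div_mul_div_comm, div_le_div_iff₀ (by positivity) (by positivity)]
    nlinarith [mul_nonneg hd0.le (sub_nonneg.2 hratio')]
  have hb3 : (0:ℝ) < 1 + 3/(d+1) := by positivity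
  have step3 : Real.exp (-(3/2)) * (1 + x^2/d) ^ (-((d+1)/2)) ≤
      (1 + (x+δ)^2/d) ^ (-((d+1)/2)) := by
    have k0 : (1 + (x+δ)^2/d) ^ (-((d+1)/2)) ≥
        ((1 + 3/(d+1)) * (1 + x^2/d)) ^ (-((d+1)/2)) :=
      Real.rpow_le_rpow_of_nonpos hbxδ hratio (by linarith)
    have k1 : ((1 + 3/(d+1)) * (1 + x^2/d)) ^ (-((d+1)/2)) =
        (1 + 3/(d+1)) ^ (-((d+1)/2)) * (1 + x^2/d) ^ (-((d+1)/2)) :=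
      Real.mul_rpow hb3.le hbx.le
    have k2 : Real.exp (-(3/2)) ≤ (1 + 3/(d+1)) ^ (-((d+1)/2)) := by
      have e1 : (1 + 3/(d+1)) ≤ Real.exp (3/(d+1)) := by
        have := Real.add_one_le_exp (3/(d+1)); linarith
      have e2 : (1 + 3/(d+1)) ^ ((d+1)/2) ≤ Real.exp (3/(d+1)) ^ ((d+1)/2 : ℝ) :=
        Real.rpow_le_rpow hb3.le e1 (by linarith)
      have e3 : Real.exp (3/(d+1)) ^ ((d+1)/2 : ℝ) = Real.exp (3/2) := by
        rw [← Real.exp_mul]; congr 1; field_simp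
      have e4 : (0:ℝ) < (1 + 3/(d+1)) ^ ((d+1)/2) := Real.rpow_pos_of_pos hb3 _
      rw [Real.rpow_neg hb3.le, Real.exp_neg]
      exact inv_anti₀ e4 (by rw [← e3]; exact e2)
    calc Real.exp (-(3/2)) * (1 + x^2/d) ^ (-((d+1)/2)) ≤
        (1 + 3/(d+1)) ^ (-((d+1)/2)) * (1 + x^2/d) ^ (-((d+1)/2)) :=
          mul_le_mul_of_nonneg_right k2 (Real.rpow_nonneg hbx.le _)
    _ = ((1 + 3/(d+1)) * (1 + x^2/d)) ^ (-((d+1)/2)) := k1.symm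
    _ ≤ _ := k0
  -- step 4 : δ * (1+x²/d)^{-1/2} ≥ √d/(d+1)
  have hsplit : (1 + x^2/d) ^ (-((d+1)/2)) =
      (1 + x^2/d) ^ (-(1/2) : ℝ) * (1 + x^2/d) ^ (-(d/2)) := by
    rw [← Real.rpow_add hbx]; congr 1; ring
  have step4 : Real.sqrt d / (d+1) ≤ δ * (1 + x^2/d) ^ (-(1/2) : ℝ) := by
    have hA0 : (0:ℝ) < d + x^2 := by positivity
    have hsA : x ≤ Real.sqrt (d + x^2) := by
      have h := Real.sqrt_le_sqrt (show x^2 ≤ d + x^2 by linarith)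
      rwa [Real.sqrt_sq hx0.le] at h
    have hAx : Real.sqrt (d + x^2) ≤ δ * (d+1) := by
      rw [hδd1, le_div_iff₀ hx0]
      calc Real.sqrt (d+x^2) * x ≤ Real.sqrt (d+x^2) * Real.sqrt (d+x^2) :=
        mul_le_mul_of_nonneg_left hsA (Real.sqrt_nonneg _)
      _ = d + x^2 := Real.mul_self_sqrt hA0.le
    have hq : (1 + x^2/d) ^ (-(1/2) : ℝ) = Real.sqrt d / Real.sqrt (d + x^2) := by
      rw [show (1 : ℝ) + x^2/d = (d + x^2)/d by field_simp]
      rw [Real.rpow_neg (by positivity), ← Real.sqrt_eq_rpow, Real.sqrt_div hA0.le,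
        inv_div]
    rw [hq, ← mul_div_assoc]
    rw [div_le_div_iff₀ hd1 (Real.sqrt_pos.2 hA0)]
    calc Real.sqrt d * Real.sqrt (d+x^2) ≤ Real.sqrt d * (δ * (d+1)) :=
      mul_le_mul_of_nonneg_left hAx (Real.sqrt_nonneg _)
    _ = δ * Real.sqrt d * (d+1) := by ring
  -- combine
  have hP : (0:ℝ) ≤ (1 + x^2/d) ^ (-(d/2)) := Real.rpow_nonneg hbx.le _
  calc Real.exp (-(3/2)) * (Real.sqrt d / (d+1)) * (1 + x^2/d) ^ (-(d/2))
      ≤ Real.exp (-(3/2)) * (δ * (1 + x^2/d) ^ (-(1/2):ℝ)) * (1 + x^2/d) ^ (-(d/2)) :=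
        mul_le_mul_of_nonneg_right
          (mul_le_mul_of_nonneg_left step4 (Real.exp_pos _).le) hP
  _ = δ * (Real.exp (-(3/2)) * (1 + x^2/d) ^ (-((d+1)/2))) := by rw [hsplit]; ring
  _ ≤ δ * (1 + (x+δ)^2/d) ^ (-((d+1)/2)) := mul_le_mul_of_nonneg_left step3 hδ0.le
  _ ≤ ∫ y in Ioc x (x+δ), (1 + y^2/d) ^ (-((d+1)/2)) := step1
  _ ≤ _ := step2
lemma integrableOn_Iio_of_neg {f : ℝ → ℝ} {a : ℝ}
    (hf : IntegrableOn (fun y => f (-y)) (Ioi (-a))) : IntegrableOn f (Iio a) := by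
  have hpre : (fun x : ℝ => -x) ⁻¹' (Iio a) = Ioi (-a) := by
    ext y
    simp only [mem_preimage, mem_Iio, mem_Ioi]
    constructor <;> intro <;> linarith
  have hrestr : volume.restrict (Iio a) =
      Measure.map (fun x : ℝ => -x) (volume.restrict (Ioi (-a))) := by
    conv_lhs => rw [← Measure.map_neg_eq_self (volume : Measure ℝ),
      measurableEmbedding_neg.restrict_map, hpre]
  rw [IntegrableOn, hrestr, measurableEmbedding_neg.integrable_map_iff]
  exact hf

lemma studentT_tail_eq (n : ℕ) (hn : 1 < n) {x : ℝ} (hx : 1 ≤ x) :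
    (studentT n {y | x < |y|}).toReal =
      2 * Cc n * ∫ y in Ioi x, (1 + y^2/(n:ℝ)) ^ (-(((n:ℝ)+1)/2)) := by
  have hd : (2:ℝ) ≤ (n:ℝ) := by exact_mod_cast hn
  set d : ℝ := (n:ℝ) with hdd
  have hC : (0:ℝ) < Cc d := lt_of_lt_of_le (by norm_num) (quarter_le_Cc hd)
  set g : ℝ → ℝ := fun y => Cc d * (1 + y^2/d) ^ (-((d+1)/2)) with hg
  have hgnn : ∀ y, 0 ≤ g y := fun y => by
    exact mul_nonneg hC.le (Real.rpow_nonneg (base_pos hd y).le _)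
  have hset : {y : ℝ | x < |y|} = Iio (-x) ∪ Ioi x := by
    ext y
    simp only [mem_setOf_eq, mem_union, mem_Iio, mem_Ioi, lt_abs]
    constructor <;> (intro h; rcases h with h | h) <;> [right; left; right; left] <;> linarith
  have hmeas : MeasurableSet (Iio (-x) ∪ Ioi x : Set ℝ) :=
    measurableSet_Iio.union measurableSet_Ioi
  have hIoi : IntegrableOn g (Ioi x) := (h_int hd hx).const_mul _
  have hgneg : (fun y : ℝ => g (-y)) = g := by
    funext y
    show Cc d * (1 + (-y)^2/d) ^ (-((d+1)/2)) = Cc d * (1 + y^2/d) ^ (-((d+1)/2))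
    rw [neg_sq]
  have hIio : IntegrableOn g (Iio (-x)) := by
    apply integrableOn_Iio_of_neg
    rw [neg_neg, hgneg]
    exact hIoi
  have hdisj : Disjoint (Iio (-x)) (Ioi x) := by
    rw [Set.disjoint_left]
    intro y h1 h2
    simp only [mem_Iio, mem_Ioi] at h1 h2
    linarith
  have hsymm : ∫ y in Iio (-x), g y = ∫ y in Ioi x, g y := by
    rw [setIntegral_congr_set Iio_ae_eq_Iic, ← integral_comp_neg_Ioi, hgneg]
  have happ : studentT d {y | x < |y|} = ∫⁻ y in Iio (-x) ∪ Ioi x, ENNReal.ofReal (g y) := by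
    rw [studentT, hset, withDensity_apply _ hmeas]
    rfl
  have hlint : ∫⁻ y in Iio (-x) ∪ Ioi x, ENNReal.ofReal (g y) =
      ENNReal.ofReal (∫ y in Iio (-x) ∪ Ioi x, g y) := by
    rw [← ofReal_integral_eq_lintegral_ofReal (hIio.union hIoi)
      (Eventually.of_forall hgnn)]
  rw [happ, hlint, ENNReal.toReal_ofReal
    (setIntegral_nonneg hmeas fun y _ => hgnn y),
    setIntegral_union hdisj measurableSet_Ioi hIio hIoi, hsymm, hg]
  simp only []
  rw [integral_const_mul]
  ring
set_option maxHeartbeats 1000000 in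
lemma tail_bounds_one (n : ℕ) (hn : 1 < n) {x : ℝ} (hx : 1 ≤ x) :
    1/20 / Real.sqrt (n:ℝ) * (1 + x^2/(n:ℝ)) ^ (-(n:ℝ)/2) ≤
      (studentT n {y | x < |y|}).toReal ∧
    (studentT n {y | x < |y|}).toReal ≤ 3 * (1 + x^2/(n:ℝ)) ^ (-(n:ℝ)/2) := by
  have hd : (2:ℝ) ≤ (n:ℝ) := by exact_mod_cast hn
  have hd0 : (0:ℝ) < (n:ℝ) := by linarith
  have hx0 : (0:ℝ) < x := by linarith
  have hbx : (0:ℝ) < 1 + x^2/(n:ℝ) := base_pos hd x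
  have hs0 : (0:ℝ) < Real.sqrt (n:ℝ) := Real.sqrt_pos.2 hd0
  have hs : Real.sqrt (n:ℝ) * Real.sqrt (n:ℝ) = (n:ℝ) := Real.mul_self_sqrt hd0.le
  rw [studentT_tail_eq n hn hx, neg_div]
  have hCl := quarter_le_Cc hd
  have hCu := Cc_le_half hd
  have hIl := integral_lower hd hx
  have hIu := integral_upper hd hx
  set d : ℝ := (n:ℝ) with hdd
  set I : ℝ := ∫ y in Ioi x, (1 + y^2/d) ^ (-((d+1)/2)) with hI
  set P : ℝ := (1 + x^2/d) ^ (-(d/2)) with hP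
  have hP0 : (0:ℝ) < P := Real.rpow_pos_of_pos hbx _
  have hI0 : (0:ℝ) ≤ I := le_trans (by positivity) hIl
  have hE : Real.exp (3/2) ≤ 4.5 := by
    have h1 := Real.exp_one_lt_d9
    have h2 : Real.exp (3/2) ^ 2 = Real.exp 1 ^ 3 := by
      rw [← Real.exp_nat_mul, ← Real.exp_nat_mul]; norm_num
    have h3 : Real.exp 1 ^ 3 ≤ (2.7182818286:ℝ)^3 :=
      pow_le_pow_left₀ (Real.exp_pos 1).le h1.le 3
    nlinarith [Real.exp_pos (3/2), Real.exp_pos 1]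
  constructor
  · -- lower bound
    have key : 1/20 / Real.sqrt d ≤ 1/2 * (Real.exp (-(3/2)) * (Real.sqrt d/(d+1))) := by
      rw [div_le_iff₀ hs0]
      have hrr : 1/2*(Real.exp (-(3/2))*(Real.sqrt d/(d+1)))*Real.sqrt d =
          Real.sqrt d * Real.sqrt d * Real.exp (-(3/2)) / (d+1) / 2 := by ring
      rw [hrr, hs, Real.exp_neg, div_div, le_div_iff₀ (by positivity)]
      have hEinv : (4.5:ℝ)⁻¹ ≤ (Real.exp (3/2))⁻¹ := inv_anti₀ (Real.exp_pos _) hE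
      nlinarith [mul_le_mul_of_nonneg_left hEinv hd0.le]
    calc 1/20 / Real.sqrt d * P ≤ 1/2 * (Real.exp (-(3/2)) * (Real.sqrt d/(d+1))) * P :=
      mul_le_mul_of_nonneg_right key hP0.le
    _ = 1/2 * (Real.exp (-(3/2)) * (Real.sqrt d/(d+1)) * P) := by ring
    _ ≤ 1/2 * I := by linarith [hIl]
    _ ≤ 2 * Cc d * I := by nlinarith [hCl, hI0]
  · -- upper bound
    have hsplit : (1 + x^2/d) ^ (-((d-1)/2)) = Real.sqrt (1 + x^2/d) * P := by
      rw [hP, Real.sqrt_eq_rpow, ← Real.rpow_add hbx]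
      congr 1; ring
    have h2d : d/(d-1) ≤ 2 := by rw [div_le_iff₀ (by linarith)]; linarith
    have hsb : Real.sqrt (1 + x^2/d) ≤ 5/4 * x := by
      have hxd : x^2/d ≤ x^2/2 := by
        rw [div_le_div_iff₀ hd0 (by norm_num)]
        nlinarith [sq_nonneg x]
      have hle : 1 + x^2/d ≤ (5/4*x)^2 := by nlinarith [hxd]
      calc Real.sqrt (1+x^2/d) ≤ Real.sqrt ((5/4*x)^2) := Real.sqrt_le_sqrt hle
      _ = 5/4*x := Real.sqrt_sq (by positivity)
    have hxb : x⁻¹ * Real.sqrt (1+x^2/d) ≤ 5/4 := by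
      rw [inv_mul_le_iff₀ hx0]
      linarith [hsb]
    calc 2 * Cc d * I ≤ 1 * I := by nlinarith [hCu, hI0]
    _ = I := one_mul I
    _ ≤ d/(d-1) * x⁻¹ * (1+x^2/d)^(-((d-1)/2)) := hIu
    _ = (d/(d-1)) * (x⁻¹ * Real.sqrt (1+x^2/d)) * P := by rw [hsplit]; ring
    _ ≤ 2 * (5/4) * P := mul_le_mul_of_nonneg_right
        (mul_le_mul h2d hxb (by positivity) (by norm_num)) hP0.le
    _ ≤ 3 * P := by nlinarith [hP0]
lemma tail_bounds_two (n : ℕ) (hn : 1 < n) {u : ℝ} (hu : 1 ≤ u) :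
    1/20 / Real.sqrt (n:ℝ) * Real.exp (-u/2) ≤
      (studentT n {y | u ≤ (n:ℝ) * Real.log (1 + y^2/(n:ℝ))}).toReal ∧
    (studentT n {y | u ≤ (n:ℝ) * Real.log (1 + y^2/(n:ℝ))}).toReal ≤
      3 * Real.exp (-u/2) := by
  have hd : (2:ℝ) ≤ (n:ℝ) := by exact_mod_cast hn
  have hd0 : (0:ℝ) < (n:ℝ) := by linarith
  set xu : ℝ := Real.sqrt ((n:ℝ) * (Real.exp (u/(n:ℝ)) - 1)) with hxu
  have hud : (0:ℝ) < u/(n:ℝ) := by positivity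
  have hval : (0:ℝ) ≤ (n:ℝ) * (Real.exp (u/(n:ℝ)) - 1) := by
    have := Real.add_one_le_exp (u/(n:ℝ))
    nlinarith
  have hxu2 : xu^2 = (n:ℝ) * (Real.exp (u/(n:ℝ)) - 1) := Real.sq_sqrt hval
  have hxu1 : 1 ≤ xu := by
    have h1 : u ≤ xu^2 := by
      rw [hxu2]
      have := Real.add_one_le_exp (u/(n:ℝ))
      have h2 : (n:ℝ) * (u/(n:ℝ)) = u := by field_simp
      nlinarith
    nlinarith [Real.sqrt_nonneg ((n:ℝ) * (Real.exp (u/(n:ℝ)) - 1))]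
  have hxu0 : (0:ℝ) ≤ xu := by linarith
  have hbase : 1 + xu^2/(n:ℝ) = Real.exp (u/(n:ℝ)) := by
    rw [hxu2]; field_simp; ring
  have hsetEq : {y : ℝ | u ≤ (n:ℝ) * Real.log (1 + y^2/(n:ℝ))} = {y : ℝ | xu ≤ |y|} := by
    ext y
    simp only [mem_setOf_eq]
    have hby : (0:ℝ) < 1 + y^2/(n:ℝ) := base_pos hd y
    rw [show (n:ℝ) * Real.log (1 + y^2/(n:ℝ)) = Real.log (1 + y^2/(n:ℝ)) * (n:ℝ) by ring,
      ← div_le_iff₀ hd0, Real.le_log_iff_exp_le hby, ← hbase]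
    constructor
    · intro h
      have h2 := mul_le_mul_of_nonneg_right h hd0.le
      rw [add_mul, add_mul, div_mul_cancel₀ _ hd0.ne', div_mul_cancel₀ _ hd0.ne'] at h2
      have hsq : xu^2 ≤ y^2 := by linarith
      calc xu = Real.sqrt (xu^2) := (Real.sqrt_sq hxu0).symm
      _ ≤ Real.sqrt (y^2) := Real.sqrt_le_sqrt hsq
      _ = |y| := Real.sqrt_sq_eq_abs y
    · intro h
      have hsq : xu^2 ≤ y^2 := by
        have h2 := mul_self_le_mul_self hxu0 h
        rw [abs_mul_abs_self] at h2
        nlinarith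
      gcongr
  have hN0 : studentT (n:ℝ) ({xu, -xu} : Set ℝ) = 0 := by
    apply withDensity_absolutelyContinuous (volume : Measure ℝ) _
    exact ((Set.finite_singleton (-xu)).insert xu).measure_zero _
  have hsetEq2 : studentT (n:ℝ) {y : ℝ | xu ≤ |y|} = studentT (n:ℝ) {y : ℝ | xu < |y|} := by
    apply le_antisymm
    · have hsub : {y : ℝ | xu ≤ |y|} ⊆ {y : ℝ | xu < |y|} ∪ ({xu, -xu} : Set ℝ) := by
        intro y hy
        have hy' : xu ≤ |y| := hy
        rcases lt_or_eq_of_le hy' with h | h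
        · exact Or.inl h
        · right
          rcases (abs_eq hxu0).1 h.symm with h2 | h2
          · left; exact h2
          · right; exact h2
      calc studentT (n:ℝ) {y : ℝ | xu ≤ |y|} ≤
          studentT (n:ℝ) ({y : ℝ | xu < |y|} ∪ ({xu, -xu} : Set ℝ)) := measure_mono hsub
      _ ≤ studentT (n:ℝ) {y : ℝ | xu < |y|} + studentT (n:ℝ) ({xu, -xu} : Set ℝ) :=
          measure_union_le _ _
      _ = studentT (n:ℝ) {y : ℝ | xu < |y|} := by rw [hN0, add_zero]
    · exact measure_mono fun y hy => show xu ≤ |y| from le_of_lt hy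
  have hexp : (1 + xu^2/(n:ℝ)) ^ (-(n:ℝ)/2) = Real.exp (-u/2) := by
    rw [hbase, ← Real.exp_mul]
    congr 1
    field_simp
  have hmain := tail_bounds_one n hn hxu1
  rw [hexp] at hmain
  rw [hsetEq, hsetEq2]
  exact hmain

/-- Lemma on `t` tails.  There are numerical constants
`0 < c₁ < c₂` such that for a `t_n`-variable `X` with `n > 1`,
`c₁ n^{-1/2}(1+x²/n)^{-n/2} ≤ P(|X| > x) ≤ c₂ (1+x²/n)^{-n/2}` for `x ≥ 1`, and
consequently `c₁ n^{-1/2} e^{-u/2} ≤ P(n log(1+X²/n) ≥ u) ≤ c₂ e^{-u/2}` for `u ≥ 1`. -/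
theorem studentT_tail_bounds :
    ∃ c₁ c₂ : ℝ, 0 < c₁ ∧ c₁ < c₂ ∧ ∀ n : ℕ, 1 < n →
      (∀ x : ℝ, 1 ≤ x →
        c₁ / Real.sqrt n * (1 + x ^ 2 / n) ^ (-(n : ℝ) / 2) ≤
            (studentT n {y | x < |y|}).toReal ∧
          (studentT n {y | x < |y|}).toReal ≤ c₂ * (1 + x ^ 2 / n) ^ (-(n : ℝ) / 2)) ∧
      (∀ u : ℝ, 1 ≤ u →
        c₁ / Real.sqrt n * Real.exp (-u / 2) ≤
            (studentT n {y | u ≤ (n : ℝ) * Real.log (1 + y ^ 2 / n)}).toReal ∧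
          (studentT n {y | u ≤ (n : ℝ) * Real.log (1 + y ^ 2 / n)}).toReal ≤
            c₂ * Real.exp (-u / 2)) := by
  refine ⟨1/20, 3, by norm_num, by norm_num, fun n hn => ⟨fun x hx => ?_, fun u hu => ?_⟩⟩
  · exact tail_bounds_one n hn hx
  · exact tail_bounds_two n hn hu
end

section
/- Let {(X_i, Y_i) : i ∈ R} be i.i.d. copies of (X, Y) ~ N(0, I₂). Then: (i) for any x > 0, P( |∑_{i∈R} X_i Y_i| ≥ 2√(x|R|) + 2x ) ≤ 4 e^{−x}; and (ii) if in addition 0 < x < |R|/16, then the centered sample correlation r_R = ∑_{i∈R} X_i Y_i / √(∑_{i∈R} X_i² ∑_{i∈R} Y_i²) satisfies P(|r_R| ≥ x) ≤ 6 exp(−|R| x² / 64). -/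
open MeasureTheory ProbabilityTheory Real Finset
open scoped Classical

/-- The standard bivariate normal distribution `N(0, I₂)`. -/
noncomputable def stdBivNormal : Measure (ℝ × ℝ) :=
  (gaussianReal 0 1).prod (gaussianReal 0 1)

/-- The centered sample correlation (no subtraction of sample means). -/
noncomputable def pearsonR0 {ι : Type*} (R : Finset ι) (x y : ι → ℝ) : ℝ :=
  (∑ i ∈ R, x i * y i) /
    Real.sqrt ((∑ i ∈ R, x i ^ 2) * (∑ i ∈ R, y i ^ 2))

/-- The centered likelihood ratio statistic `L_R = -(|R|-1) log(1 - r_R²)`. -/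
noncomputable def llrStat0 {ι : Type*} (R : Finset ι) (x y : ι → ℝ) : ℝ :=
  -((R.card : ℝ) - 1) * Real.log (1 - pearsonR0 R x y ^ 2)

section CCBAux


lemma ccb_pdf01 (x : ℝ) : gaussianPDFReal 0 1 x = (√(2*π))⁻¹ * rexp (-(1/2) * x^2) := by
  unfold gaussianPDFReal
  simp only [NNReal.coe_one, mul_one, sub_zero]
  ring_nf

lemma ccb_integral_gauss01 (f : ℝ → ℝ) :
    ∫ x, f x ∂(gaussianReal 0 1) = ∫ x, gaussianPDFReal 0 1 x * f x := by
  rw [gaussianReal_of_var_ne_zero 0 one_ne_zero]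
  have : gaussianPDF 0 1 = fun x => ((gaussianPDFReal 0 1 x).toNNReal : ENNReal) := by
    ext x; rw [gaussianPDF_def]; rfl
  rw [this, integral_withDensity_eq_integral_smul
    ((measurable_gaussianPDFReal 0 1).real_toNNReal) f]
  congr 1; ext x
  simp [NNReal.smul_def, Real.coe_toNNReal _ (gaussianPDFReal_nonneg 0 1 x)]

lemma ccb_integrable_gauss01 (f : ℝ → ℝ)
    (hint : Integrable (fun x => gaussianPDFReal 0 1 x * f x) (volume : Measure ℝ)) :
    Integrable f (gaussianReal 0 1) := by
  rw [gaussianReal_of_var_ne_zero 0 one_ne_zero]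
  have hd : gaussianPDF 0 1 = fun x => ((gaussianPDFReal 0 1 x).toNNReal : ENNReal) := by
    ext x; rw [gaussianPDF_def]; rfl
  rw [hd, integrable_withDensity_iff_integrable_smul
    ((measurable_gaussianPDFReal 0 1).real_toNNReal)]
  refine hint.congr (Filter.Eventually.of_forall fun x => ?_)
  simp [NNReal.smul_def, Real.coe_toNNReal _ (gaussianPDFReal_nonneg 0 1 x), mul_comm]

lemma ccb_intA (s : ℝ) (hs : s < 1/2) :
    Integrable (fun x => gaussianPDFReal 0 1 x * rexp (s * x^2)) (volume : Measure ℝ) := by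
  have : (fun x => gaussianPDFReal 0 1 x * rexp (s * x^2))
      = fun x => (√(2*π))⁻¹ * rexp (-(1/2 - s) * x^2) := by
    ext x; rw [ccb_pdf01, mul_assoc, ← Real.exp_add]; ring_nf
  rw [this]
  exact (integrable_exp_neg_mul_sq (by linarith)).const_mul _

lemma ccb_valA (s : ℝ) (hs : s < 1/2) :
    ∫ x, gaussianPDFReal 0 1 x * rexp (s * x^2) = (√(1 - 2*s))⁻¹ := by
  have h1 : (fun x => gaussianPDFReal 0 1 x * rexp (s * x^2))
      = fun x => (√(2*π))⁻¹ * rexp (-(1/2 - s) * x^2) := by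
    ext x; rw [ccb_pdf01, mul_assoc, ← Real.exp_add]; ring_nf
  rw [h1, MeasureTheory.integral_const_mul, integral_gaussian]
  have hb : (0:ℝ) < 1/2 - s := by linarith
  have h2 : π / (1/2 - s) = (2*π) / (1 - 2*s) := by
    rw [div_eq_div_iff hb.ne' (by linarith)]; ring
  have h2π : (0:ℝ) < √(2*π) := Real.sqrt_pos.2 (by positivity)
  rw [h2, Real.sqrt_div' (2*π) (by linarith)]
  field_simp

lemma ccb_intB (t : ℝ) :
    Integrable (fun x => gaussianPDFReal 0 1 x * rexp (t * x)) (volume : Measure ℝ) := by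
  have h1 : (fun x => gaussianPDFReal 0 1 x * rexp (t * x))
      = fun x => ((√(2*π))⁻¹ * rexp (t^2/2)) * rexp (-(1/2) * (x - t)^2) := by
    ext x
    rw [ccb_pdf01, mul_assoc, ← Real.exp_add, mul_assoc, ← Real.exp_add]
    ring_nf
  rw [h1]
  exact ((integrable_exp_neg_mul_sq (by norm_num : (0:ℝ) < 1/2)).comp_sub_right t).const_mul _

lemma ccb_valB (t : ℝ) :
    ∫ x, gaussianPDFReal 0 1 x * rexp (t * x) = rexp (t^2/2) := by
  have h1 : (fun x => gaussianPDFReal 0 1 x * rexp (t * x))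
      = fun x => ((√(2*π))⁻¹ * rexp (t^2/2)) * rexp (-(1/2) * (x - t)^2) := by
    ext x
    rw [ccb_pdf01, mul_assoc, ← Real.exp_add, mul_assoc, ← Real.exp_add]
    ring_nf
  rw [h1, MeasureTheory.integral_const_mul,
    integral_sub_right_eq_self (fun u => rexp (-(1/2) * u^2)) t, integral_gaussian]
  have h2π : (0:ℝ) < √(2*π) := Real.sqrt_pos.2 (by positivity)
  have h3 : π / (1/2) = 2*π := by ring
  rw [h3]
  field_simp

lemma ccb_gaussA (s : ℝ) (hs : s < 1/2) :
    (∫ x, rexp (s * x^2) ∂(gaussianReal 0 1)) = (√(1 - 2*s))⁻¹ ∧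
    Integrable (fun x => rexp (s * x^2)) (gaussianReal 0 1) :=
  ⟨by rw [ccb_integral_gauss01, ccb_valA s hs], ccb_integrable_gauss01 _ (ccb_intA s hs)⟩

lemma ccb_gaussB (t : ℝ) :
    (∫ x, rexp (t * x) ∂(gaussianReal 0 1)) = rexp (t^2/2) ∧
    Integrable (fun x => rexp (t * x)) (gaussianReal 0 1) :=
  ⟨by rw [ccb_integral_gauss01, ccb_valB], ccb_integrable_gauss01 _ (ccb_intB t)⟩

lemma ccb_bivInt (t : ℝ) (ht : |t| < 1) :
    Integrable (fun p : ℝ × ℝ => rexp (t * (p.1 * p.2))) stdBivNormal := by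
  have hmeas : AEStronglyMeasurable (fun p : ℝ × ℝ => rexp (t * (p.1 * p.2))) stdBivNormal :=
    (Continuous.aestronglyMeasurable (by continuity))
  rw [stdBivNormal] at hmeas ⊢
  rw [integrable_prod_iff hmeas]
  constructor
  · refine Filter.Eventually.of_forall fun x => ?_
    refine (ccb_gaussB (t * x)).2.congr (Filter.Eventually.of_forall fun y => ?_)
    ring_nf
  · have key : ∀ x : ℝ, (∫ y, ‖rexp (t * (x * y))‖ ∂(gaussianReal 0 1))
        = rexp ((t^2/2) * x^2) := by
      intro x
      simp_rw [Real.norm_eq_abs, abs_of_pos (Real.exp_pos _)]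
      have h1 : (fun y => rexp (t * (x * y))) = fun y => rexp ((t * x) * y) := by
        ext y; ring_nf
      rw [h1, (ccb_gaussB (t * x)).1]
      congr 1; ring
    simp_rw [key]
    exact (ccb_gaussA (t^2/2) (by nlinarith [abs_nonneg t, sq_abs t])).2

lemma ccb_bivVal (t : ℝ) (ht : |t| < 1) :
    ∫ p, rexp (t * (p.1 * p.2)) ∂stdBivNormal = (√(1 - t^2))⁻¹ := by
  have hint := ccb_bivInt t ht
  rw [stdBivNormal] at hint ⊢
  rw [MeasureTheory.integral_prod _ hint]
  have h1 : ∀ x : ℝ, (∫ y, rexp (t * (x * y)) ∂(gaussianReal 0 1)) = rexp ((t^2/2) * x^2) := by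
    intro x
    have h1 : (fun y => rexp (t * (x * y))) = fun y => rexp ((t * x) * y) := by
      ext y; ring_nf
    rw [h1, (ccb_gaussB (t * x)).1]
    congr 1; ring
  simp_rw [h1]
  rw [(ccb_gaussA (t^2/2) (by nlinarith [abs_nonneg t, sq_abs t])).1]
  congr 2; ring

instance : IsProbabilityMeasure stdBivNormal := by
  rw [stdBivNormal]; infer_instance

lemma ccb_bivFstVal (f : ℝ → ℝ) (hf : Continuous f) :
    ∫ p, f p.1 ∂stdBivNormal = ∫ x, f x ∂(gaussianReal 0 1) := by
  have hmap : stdBivNormal.map Prod.fst = gaussianReal 0 1 := by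
    rw [stdBivNormal, Measure.map_fst_prod]; simp
  rw [← hmap, integral_map measurable_fst.aemeasurable hf.aestronglyMeasurable]

lemma ccb_bivFstInt (f : ℝ → ℝ) (hf : Continuous f)
    (hI : Integrable f (gaussianReal 0 1)) :
    Integrable (fun p : ℝ × ℝ => f p.1) stdBivNormal := by
  have hmap : stdBivNormal.map Prod.fst = gaussianReal 0 1 := by
    rw [stdBivNormal, Measure.map_fst_prod]; simp
  have := (integrable_map_measure (μ := stdBivNormal) (f := Prod.fst)
    (hf.aestronglyMeasurable) measurable_fst.aemeasurable).mp (by rwa [hmap])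
  exact this

lemma ccb_bivSndVal (f : ℝ → ℝ) (hf : Continuous f) :
    ∫ p, f p.2 ∂stdBivNormal = ∫ x, f x ∂(gaussianReal 0 1) := by
  have hmap : stdBivNormal.map Prod.snd = gaussianReal 0 1 := by
    rw [stdBivNormal, Measure.map_snd_prod]; simp
  rw [← hmap, integral_map measurable_snd.aemeasurable hf.aestronglyMeasurable]

lemma ccb_bivSndInt (f : ℝ → ℝ) (hf : Continuous f)
    (hI : Integrable f (gaussianReal 0 1)) :
    Integrable (fun p : ℝ × ℝ => f p.2) stdBivNormal := by
  have hmap : stdBivNormal.map Prod.snd = gaussianReal 0 1 := by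
    rw [stdBivNormal, Measure.map_snd_prod]; simp
  have := (integrable_map_measure (μ := stdBivNormal) (f := Prod.snd)
    (hf.aestronglyMeasurable) measurable_snd.aemeasurable).mp (by rwa [hmap])
  exact this



lemma ccb_iIndepFun_ae_eq {Ω : Type} {κ : Type} [MeasurableSpace Ω] {μ : Measure Ω}
    {β : κ → Type*} [m : ∀ i, MeasurableSpace (β i)] {f g : ∀ i, Ω → β i}
    (hf : iIndepFun f μ) (h : ∀ i, f i =ᵐ[μ] g i) : iIndepFun g μ := by
  rw [iIndepFun_iff_measure_inter_preimage_eq_mul] at hf ⊢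
  intro S sets hsets
  have hae : ∀ i, (f i ⁻¹' sets i : Set Ω) =ᵐ[μ] (g i ⁻¹' sets i : Set Ω) := by
    intro i
    filter_upwards [h i] with ω hω
    show (f i ω ∈ sets i) = (g i ω ∈ sets i)
    rw [hω]
  have h2 : (⋂ i ∈ S, f i ⁻¹' sets i : Set Ω) =ᵐ[μ] (⋂ i ∈ S, g i ⁻¹' sets i : Set Ω) := by
    have : ∀ᵐ ω ∂μ, ∀ i ∈ S, f i ω = g i ω := by
      rw [Filter.eventually_all_finset]
      exact fun i _ => h i
    filter_upwards [this] with ω hω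
    show (ω ∈ ⋂ i ∈ S, f i ⁻¹' sets i) = (ω ∈ ⋂ i ∈ S, g i ⁻¹' sets i)
    simp only [Set.mem_iInter, Set.mem_preimage, eq_iff_iff]
    constructor
    · intro hmem i hi; rw [← hω i hi]; exact hmem i hi
    · intro hmem i hi; rw [hω i hi]; exact hmem i hi
  rw [← measure_congr h2, hf S hsets]
  exact Finset.prod_congr rfl fun i hi => measure_congr (hae i)

lemma ccb_chernoff {Ω : Type} [MeasurableSpace Ω] {P : Measure Ω} [IsProbabilityMeasure P]
    {κ : Type} [Fintype κ] (Z : κ → Ω → ℝ) (hmeas : ∀ i, Measurable (Z i))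
    (hindep : iIndepFun Z P)
    (t a c : ℝ) (ht : 0 ≤ t) (hc : 0 ≤ c)
    (hint : ∀ i, Integrable (fun ω => rexp (t * Z i ω)) P)
    (hmgf : ∀ i, mgf (Z i) P t ≤ c) :
    (P {ω | a ≤ ∑ i, Z i ω}).toReal ≤ rexp (-t * a) * c ^ (Fintype.card κ) := by
  have hS := measure_ge_le_exp_mul_mgf (μ := P) (X := ∑ i, Z i) a ht
    (hindep.integrable_exp_mul_sum hmeas (fun i _ => hint i))
  have hset : {ω | a ≤ (∑ i, Z i) ω} = {ω | a ≤ ∑ i, Z i ω} := by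
    simp [Finset.sum_apply]
  rw [hset, hindep.mgf_sum hmeas] at hS
  refine hS.trans (mul_le_mul_of_nonneg_left ?_ (Real.exp_nonneg _))
  calc ∏ i, mgf (Z i) P t ≤ ∏ _i : κ, c :=
        Finset.prod_le_prod (fun i _ => mgf_nonneg) (fun i _ => hmgf i)
    _ = c ^ (Fintype.card κ) := by simp [Finset.prod_const, Finset.card_univ]

-- bound 1 : (√(1-t²))⁻¹ ≤ exp (t²/(2(1-t))) for 0 ≤ t < 1
lemma ccb_mgf_bound1 (t : ℝ) (h0 : 0 ≤ t) (h1 : t < 1) :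
    (√(1 - t^2))⁻¹ ≤ rexp (t^2 / (2 * (1 - t))) := by
  have ht1 : 0 < 1 - t := by linarith
  have ht2 : 0 < 1 - t^2 := by nlinarith
  set v : ℝ := t^2 / (1 - t) with hv
  have hv0 : 0 ≤ v := by positivity
  have hexp : rexp (-v) ≤ 1 - t^2 := by
    have h := Real.add_one_le_exp v
    have hEpos := Real.exp_pos v
    rw [Real.exp_neg]
    rw [inv_le_iff_one_le_mul₀ hEpos]
    -- 1 ≤ (1 - t^2) * exp v ; exp v ≥ 1 + v
    have : (1 - t^2) * (v + 1) ≤ (1 - t^2) * rexp v := by nlinarith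
    refine le_trans ?_ this
    have hveq : (1 - t^2) * (v + 1) = 1 + t^3 := by
      rw [hv]; field_simp; ring
    rw [hveq]; nlinarith
  -- now take square roots
  have hsq : rexp (-v/2) ≤ √(1 - t^2) := by
    have : √(rexp (-v)) ≤ √(1 - t^2) := Real.sqrt_le_sqrt hexp
    rwa [show rexp (-v) = (rexp (-v/2))^2 by rw [sq, ← Real.exp_add]; ring_nf,
      Real.sqrt_sq (Real.exp_nonneg _)] at this
  have hpos : 0 < rexp (-v/2) := Real.exp_pos _
  have := inv_anti₀ hpos hsq
  refine this.trans_eq ?_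
  rw [← Real.exp_neg]
  congr 1
  rw [hv, neg_div, neg_neg, div_div]
  ring_nf

-- bound 2 : exp(1/8) * (√(3/2))⁻¹ ≤ exp (-(1/64))
lemma ccb_mgf_bound2 : rexp (1/8) * (√(3/2 : ℝ))⁻¹ ≤ rexp (-(1/64)) := by
  have h23 : (2/3 : ℝ) ≤ rexp (-(9/32)) := by
    have h := Real.add_one_le_exp (-(9/32) : ℝ)
    -- 1 - 9/32 = 23/32 ≤ exp(-9/32) ; but need 2/3 ≤ exp(-9/32): 2/3 ≤ 23/32? 64/96 vs 69/96 ✓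
    linarith
  have hs : (√(3/2 : ℝ))⁻¹ = √(2/3 : ℝ) := by
    rw [← Real.sqrt_inv]; norm_num
  have h2 : √(2/3 : ℝ) ≤ rexp (-(9/64)) := by
    have := Real.sqrt_le_sqrt h23
    rwa [show rexp (-(9/32) : ℝ) = (rexp (-(9/64)))^2 by rw [sq, ← Real.exp_add]; ring_nf,
      Real.sqrt_sq (Real.exp_nonneg _)] at this
  rw [hs]
  calc rexp (1/8) * √(2/3 : ℝ) ≤ rexp (1/8) * rexp (-(9/64)) := by
        exact mul_le_mul_of_nonneg_left h2 (Real.exp_nonneg _)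
    _ = rexp (-(1/64)) := by rw [← Real.exp_add]; norm_num

lemma ccb_exponent (u v : ℝ) (hu : 0 < u) (hv : 0 < v) :
    -(u/(v+u)) * (2*(u*v) + 2*u^2) + v^2 * ((u/(v+u))^2 / (2*(1 - u/(v+u)))) ≤ -u^2 := by
  have hs : 0 < v + u := by linarith
  have h1t : 1 - u/(v+u) = v/(v+u) := by field_simp; ring
  have hterm1 : -(u/(v+u)) * (2*(u*v) + 2*u^2) = -(2*u^2) := by
    field_simp
  have hterm2 : v^2 * ((u/(v+u))^2 / (2*(1 - u/(v+u)))) = v*u^2/(2*(v+u)) := by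
    rw [h1t]; field_simp
  rw [hterm1, hterm2]
  have h3 : v * u^2 / (2*(v+u)) ≤ u^2 / 2 := by
    rw [div_le_div_iff₀ (by positivity) (by norm_num)]
    nlinarith
  nlinarith

lemma ccb_abs_pearson_le_one {ι : Type*} (R : Finset ι) (f h : ι → ℝ) :
    |pearsonR0 R f h| ≤ 1 := by
  unfold pearsonR0
  set s := ∑ i ∈ R, f i * h i with hs
  set q := (∑ i ∈ R, f i ^ 2) * (∑ i ∈ R, h i ^ 2) with hq
  rcases eq_or_lt_of_le (Real.sqrt_nonneg q) with hq0 | hq0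
  · rw [← hq0, div_zero, abs_zero]; exact zero_le_one
  · rw [abs_div, abs_of_nonneg (Real.sqrt_nonneg q), div_le_one hq0]
    refine Real.abs_le_sqrt ?_
    exact Finset.sum_mul_sq_le_sq_mul_sq R f h

end CCBAux

/-- Lemma on sums of products and the centered correlation.  For
i.i.d. `N(0, I₂)` pairs on `R`: (i) `P(|∑ X_i Y_i| ≥ 2√(x|R|) + 2x) ≤ 4 e^{-x}` for
`x > 0`; (ii) `P(|r_R| ≥ x) ≤ 6 exp(-|R| x²/64)` for `0 < x < |R|/16`. -/
theorem centered_correlation_tail_bounds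
    (Ω : Type) (mΩ : MeasurableSpace Ω) (P : Measure Ω) (hP : IsProbabilityMeasure P)
    (ι : Type) (R : Finset ι) (X Y : ι → Ω → ℝ)
    (hIndep : iIndepFun
      (fun (i : {j // j ∈ R}) ω => (X i.1 ω, Y i.1 ω)) P)
    (hDist : ∀ i ∈ R, Measure.map (fun ω => (X i ω, Y i ω)) P = stdBivNormal) :
    (∀ x : ℝ, 0 < x →
      (P {ω | 2 * Real.sqrt (x * R.card) + 2 * x ≤
          |∑ i ∈ R, X i ω * Y i ω|}).toReal ≤ 4 * Real.exp (-x)) ∧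
    (∀ x : ℝ, 0 < x → x < (R.card : ℝ) / 16 →
      (P {ω | x ≤ |pearsonR0 R (fun i => X i ω) (fun i => Y i ω)|}).toReal ≤
        6 * Real.exp (-(R.card : ℝ) * x ^ 2 / 64)) := by
  classical
  haveI := hP
  -- measurable representatives
  have hAE : ∀ i : {j // j ∈ R}, AEMeasurable (fun ω => (X i.1 ω, Y i.1 ω)) P := by
    intro i
    by_contra hc
    have h0 := Measure.map_of_not_aemeasurable hc
    rw [hDist i.1 i.2] at h0
    have h1 := congrArg (fun μ : Measure (ℝ × ℝ) => μ Set.univ) h0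
    simp [measure_univ] at h1
  set g : {j // j ∈ R} → Ω → ℝ × ℝ := fun i => (hAE i).mk _ with hgdef
  have hgmeas : ∀ i, Measurable (g i) := fun i => (hAE i).measurable_mk
  have hgae : ∀ i, (fun ω => (X i.1 ω, Y i.1 ω)) =ᵐ[P] g i := fun i => (hAE i).ae_eq_mk
  have hIndep' : iIndepFun g P := ccb_iIndepFun_ae_eq hIndep hgae
  have hMap : ∀ i, Measure.map (g i) P = stdBivNormal := fun i => by
    rw [← Measure.map_congr (hgae i)]; exact hDist i.1 i.2
  have hall : ∀ᵐ ω ∂P, ∀ i : {j // j ∈ R}, (X i.1 ω, Y i.1 ω) = g i ω := ae_all_iff.2 hgae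
  -- generic transfer of mgf and integrability
  have hmgf_eq : ∀ (i : {j // j ∈ R}) (f : ℝ × ℝ → ℝ), Continuous f → ∀ t : ℝ,
      mgf (fun ω => f (g i ω)) P t = ∫ p, rexp (t * f p) ∂stdBivNormal := by
    intro i f hf t
    have hc2 : Continuous fun p : ℝ × ℝ => rexp (t * f p) :=
      Real.continuous_exp.comp (continuous_const.mul hf)
    rw [← hMap i, integral_map (hgmeas i).aemeasurable hc2.aestronglyMeasurable]
    rfl
  have hint_tr : ∀ (i : {j // j ∈ R}) (f : ℝ × ℝ → ℝ), Continuous f → ∀ t : ℝ,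
      Integrable (fun p => rexp (t * f p)) stdBivNormal →
      Integrable (fun ω => rexp (t * f (g i ω))) P := by
    intro i f hf t hI
    have hc2 : Continuous fun p : ℝ × ℝ => rexp (t * f p) :=
      Real.continuous_exp.comp (continuous_const.mul hf)
    exact (integrable_map_measure hc2.aestronglyMeasurable (hgmeas i).aemeasurable).mp
      (by rw [hMap i]; exact hI)
  -- generic one-sided Chernoff bound for functionals of the pairs
  have key : ∀ (f : ℝ × ℝ → ℝ), Continuous f → ∀ (t c a : ℝ), 0 ≤ t → 0 ≤ c →
      Integrable (fun p => rexp (t * f p)) stdBivNormal →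
      (∫ p, rexp (t * f p) ∂stdBivNormal) ≤ c →
      (P {ω | a ≤ ∑ i : {j // j ∈ R}, f (g i ω)}).toReal ≤ rexp (-t * a) * c ^ R.card := by
    intro f hf t c a ht hc hI hM
    have h1 : iIndepFun (fun i ω => f (g i ω)) P :=
      hIndep'.comp (fun _ => f) (fun _ => hf.measurable)
    have h2 := ccb_chernoff (P := P) (fun i ω => f (g i ω))
      (fun i => hf.measurable.comp (hgmeas i)) h1 t a c ht hc
      (fun i => hint_tr i f hf t hI)
      (fun i => le_of_eq_of_le (hmgf_eq i f hf t) hM)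
    rwa [Fintype.card_coe] at h2
  set S : Ω → ℝ := fun ω => ∑ i : {j // j ∈ R}, (g i ω).1 * (g i ω).2 with hSdef
  have union2 : ∀ A B : Set Ω, (P (A ∪ B)).toReal ≤ (P A).toReal + (P B).toReal := by
    intro A B
    rw [← ENNReal.toReal_add (measure_ne_top _ _) (measure_ne_top _ _)]
    exact ENNReal.toReal_mono
      (ENNReal.add_ne_top.2 ⟨measure_ne_top _ _, measure_ne_top _ _⟩) (measure_union_le _ _)
  have hfmul : Continuous fun p : ℝ × ℝ => p.1 * p.2 := continuous_fst.mul continuous_snd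
  -- main two-sided tail bound for S
  have keyS : ∀ x : ℝ, 0 < x →
      (P {ω | 2 * Real.sqrt (x * R.card) + 2 * x ≤ |S ω|}).toReal ≤ 2 * rexp (-x) := by
    intro x hx
    rcases Nat.eq_zero_or_pos R.card with h0 | hpos
    · have hRe : R = ∅ := Finset.card_eq_zero.mp h0
      have hset : {ω | 2 * Real.sqrt (x * R.card) + 2 * x ≤ |S ω|} = ∅ := by
        ext ω
        simp only [Set.mem_setOf_eq, Set.mem_empty_iff_false, iff_false, not_le]
        have hz : S ω = 0 := by
          apply Finset.sum_eq_zero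
          intro i _
          exact absurd i.2 (by simp [hRe])
        rw [hz, abs_zero]
        have h1 := Real.sqrt_nonneg (x * R.card)
        linarith
      rw [hset]
      simp only [measure_empty, ENNReal.toReal_zero]
      positivity
    · set u := Real.sqrt x with hu'
      set v := Real.sqrt (R.card : ℝ) with hv'
      have hu : 0 < u := Real.sqrt_pos.2 hx
      have hv : 0 < v := Real.sqrt_pos.2 (by exact_mod_cast hpos)
      have hx2 : x = u^2 := (Real.sq_sqrt hx.le).symm
      have hn2 : (R.card : ℝ) = v^2 := (Real.sq_sqrt (Nat.cast_nonneg _)).symm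
      set t := u / (v + u) with ht'
      have ht0 : 0 < t := div_pos hu (add_pos hv hu)
      have ht1 : t < 1 := by
        rw [ht', div_lt_one (add_pos hv hu)]; linarith
      have habs : |t| < 1 := by rw [abs_of_pos ht0]; exact ht1
      set a := 2 * Real.sqrt (x * R.card) + 2 * x with ha'
      set c := rexp (t^2 / (2 * (1 - t))) with hc'
      have hMle : (∫ p, rexp (t * (p.1 * p.2)) ∂stdBivNormal) ≤ c := by
        rw [ccb_bivVal t habs]; exact ccb_mgf_bound1 t ht0.le ht1
      have he : (fun p : ℝ × ℝ => rexp (t * (-(p.1 * p.2))))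
          = fun p : ℝ × ℝ => rexp ((-t) * (p.1 * p.2)) := by ext p; ring_nf
      have hMle2 : (∫ p, rexp (t * (-(p.1 * p.2))) ∂stdBivNormal) ≤ c := by
        rw [show (fun p : ℝ × ℝ => rexp (t * (-(p.1 * p.2)))) = _ from he,
          ccb_bivVal (-t) (by rwa [abs_neg]), show 1 - (-t)^2 = 1 - t^2 by ring]
        exact ccb_mgf_bound1 t ht0.le ht1
      have hI2 : Integrable (fun p : ℝ × ℝ => rexp (t * (-(p.1 * p.2)))) stdBivNormal := by
        rw [he]; exact ccb_bivInt (-t) (by rwa [abs_neg])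
      have hup := key (fun p => p.1 * p.2) hfmul t c a ht0.le (Real.exp_nonneg _)
        (ccb_bivInt t habs) hMle
      have hdn := key (fun p => -(p.1 * p.2)) hfmul.neg t c a ht0.le (Real.exp_nonneg _)
        hI2 hMle2
      have hexp : rexp (-t * a) * c ^ R.card ≤ rexp (-x) := by
        rw [hc', ← Real.exp_nat_mul, ← Real.exp_add, Real.exp_le_exp]
        have hsq : Real.sqrt (x * R.card) = u * v := by
          rw [hx2, hn2, show u^2 * v^2 = (u*v)^2 by ring]
          exact Real.sqrt_sq (mul_pos hu hv).le
        have h9 := ccb_exponent u v hu hv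
        rw [← ht'] at h9
        rw [ha', hsq, hx2, hn2]
        linarith [h9]
      have hup' : (P {ω | a ≤ S ω}).toReal ≤ rexp (-x) := le_trans hup hexp
      have hsetneg : {ω | a ≤ ∑ i : {j // j ∈ R}, -((g i ω).1 * (g i ω).2)}
          = {ω | S ω ≤ -a} := by
        ext ω
        simp only [hSdef, Set.mem_setOf_eq, Finset.sum_neg_distrib]
        constructor
        · intro h; linarith
        · intro h; linarith
      have hdn' : (P {ω | S ω ≤ -a}).toReal ≤ rexp (-x) := by
        rw [← hsetneg]; exact le_trans hdn hexp
      have hsub : {ω | a ≤ |S ω|} ⊆ {ω | a ≤ S ω} ∪ {ω | S ω ≤ -a} := by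
        intro ω hω
        have hω' : a ≤ |S ω| := hω
        rcases le_abs.mp hω' with h | h
        · exact Or.inl h
        · exact Or.inr (show S ω ≤ -a by linarith)
      calc (P {ω | a ≤ |S ω|}).toReal
          ≤ (P ({ω | a ≤ S ω} ∪ {ω | S ω ≤ -a})).toReal :=
            ENNReal.toReal_mono (measure_ne_top _ _) (measure_mono hsub)
        _ ≤ (P {ω | a ≤ S ω}).toReal + (P {ω | S ω ≤ -a}).toReal := union2 _ _
        _ ≤ rexp (-x) + rexp (-x) := add_le_add hup' hdn'
        _ = 2 * rexp (-x) := by ring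
  -- transfer from the a.e. representatives back to X, Y
  have hsum_eq : ∀ ω : Ω, (∀ i : {j // j ∈ R}, (X i.1 ω, Y i.1 ω) = g i ω) →
      (∑ i ∈ R, X i ω * Y i ω) = S ω := by
    intro ω hω
    rw [hSdef]
    rw [← Finset.sum_attach R (fun j => X j ω * Y j ω), ← Finset.univ_eq_attach]
    refine Finset.sum_congr rfl fun i _ => ?_
    rw [← hω i]
  constructor
  · -- part (i)
    intro x hx
    have hsetae : {ω | 2 * Real.sqrt (x * R.card) + 2 * x ≤ |∑ i ∈ R, X i ω * Y i ω|}
        =ᵐ[P] {ω | 2 * Real.sqrt (x * R.card) + 2 * x ≤ |S ω|} := by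
      filter_upwards [hall] with ω hω
      show (2 * Real.sqrt (x * R.card) + 2 * x ≤ |∑ i ∈ R, X i ω * Y i ω|)
          = (2 * Real.sqrt (x * R.card) + 2 * x ≤ |S ω|)
      rw [hsum_eq ω hω]
    rw [measure_congr hsetae]
    have h2 := keyS x hx
    have h3 := Real.exp_pos (-x)
    linarith
  · -- part (ii)
    intro x hx hxn
    by_cases hx1 : x ≤ 1
    · -- main case
      have hn_pos : (0:ℝ) < (R.card : ℝ) := by nlinarith
      set Qx : Ω → ℝ := fun ω => ∑ i : {j // j ∈ R}, (g i ω).1 ^ 2 with hQxdef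
      set Qy : Ω → ℝ := fun ω => ∑ i : {j // j ∈ R}, (g i ω).2 ^ 2 with hQydef
      set r' : Ω → ℝ := fun ω => S ω / Real.sqrt (Qx ω * Qy ω) with hr'def
      set u := (R.card : ℝ) * x ^ 2 / 64 with hu'
      have hu0 : 0 < u := by positivity
      -- tail for |S|
      have hA : (P {ω | (R.card : ℝ) * x / 2 ≤ |S ω|}).toReal ≤ 2 * rexp (-u) := by
        have hsq : Real.sqrt (u * R.card) = (R.card : ℝ) * x / 8 := by
          rw [show u * (R.card : ℝ) = ((R.card : ℝ) * x / 8) ^ 2 by rw [hu']; ring]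
          exact Real.sqrt_sq (by positivity)
        have hth : 2 * Real.sqrt (u * R.card) + 2 * u ≤ (R.card : ℝ) * x / 2 := by
          rw [hsq, hu']
          nlinarith
        have hsub : {ω | (R.card : ℝ) * x / 2 ≤ |S ω|}
            ⊆ {ω | 2 * Real.sqrt (u * R.card) + 2 * u ≤ |S ω|} := by
          intro ω hω
          exact le_trans hth hω
        exact le_trans (ENNReal.toReal_mono (measure_ne_top _ _) (measure_mono hsub))
          (keyS u hu0)
      -- chi-square lower tails
      have hgauss14 := ccb_gaussA (-(1/4) : ℝ) (by norm_num)
      have hval32 : (√(1 - 2 * (-(1/4) : ℝ)))⁻¹ = (√(3/2 : ℝ))⁻¹ := by norm_num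
      have hc32 : (0:ℝ) ≤ (√(3/2 : ℝ))⁻¹ := by positivity
      have hchiBound : rexp (-(1/4) * (-(R.card : ℝ)/2)) * ((√(3/2 : ℝ))⁻¹) ^ R.card
          ≤ rexp (-u) := by
        have h1 : rexp (-(1/4) * (-(R.card : ℝ)/2)) = rexp (1/8) ^ R.card := by
          rw [← Real.exp_nat_mul]; congr 1; push_cast; ring
        rw [h1, ← mul_pow]
        calc (rexp (1/8) * (√(3/2 : ℝ))⁻¹) ^ R.card
            ≤ (rexp (-(1/64))) ^ R.card :=
              pow_le_pow_left₀ (by positivity) ccb_mgf_bound2 _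
          _ = rexp (-(R.card : ℝ)/64) := by
              rw [← Real.exp_nat_mul]; congr 1; push_cast; ring
          _ ≤ rexp (-u) := by
              rw [Real.exp_le_exp, hu']
              have hx2le : x ^ 2 ≤ 1 := by nlinarith
              have h8 := mul_le_mul_of_nonneg_left hx2le hn_pos.le
              linarith
      have hBx : (P {ω | -(R.card : ℝ)/2 ≤ ∑ i : {j // j ∈ R}, -((g i ω).1 ^ 2)}).toReal
          ≤ rexp (-u) := by
        have hfc : Continuous fun p : ℝ × ℝ => -(p.1 ^ 2) := (continuous_fst.pow 2).neg
        have heq : (fun p : ℝ × ℝ => rexp ((1/4) * (-(p.1 ^ 2))))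
            = fun p : ℝ × ℝ => rexp ((-(1/4)) * p.1 ^ 2) := by ext p; ring_nf
        have hIv : Integrable (fun p : ℝ × ℝ => rexp ((1/4) * (-(p.1 ^ 2)))) stdBivNormal := by
          rw [heq]
          exact ccb_bivFstInt (fun z => rexp ((-(1/4)) * z ^ 2))
            (Real.continuous_exp.comp (continuous_const.mul (continuous_pow 2))) hgauss14.2
        have hMv : (∫ p, rexp ((1/4) * (-(p.1 ^ 2))) ∂stdBivNormal) ≤ (√(3/2 : ℝ))⁻¹ := by
          rw [heq]
          rw [ccb_bivFstVal (fun z => rexp ((-(1/4)) * z ^ 2))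
            (Real.continuous_exp.comp (continuous_const.mul (continuous_pow 2)))]
          rw [hgauss14.1, hval32]
        have h5 := key (fun p => -(p.1 ^ 2)) hfc (1/4) ((√(3/2 : ℝ))⁻¹)
          (-(R.card : ℝ)/2) (by norm_num) hc32 hIv hMv
        exact le_trans h5 (by
          rw [show -(1/4 : ℝ) * (-(R.card : ℝ)/2) = (-(1/4)) * (-(R.card : ℝ)/2) by norm_num]
          exact hchiBound)
      have hBy : (P {ω | -(R.card : ℝ)/2 ≤ ∑ i : {j // j ∈ R}, -((g i ω).2 ^ 2)}).toReal
          ≤ rexp (-u) := by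
        have hfc : Continuous fun p : ℝ × ℝ => -(p.2 ^ 2) := (continuous_snd.pow 2).neg
        have heq : (fun p : ℝ × ℝ => rexp ((1/4) * (-(p.2 ^ 2))))
            = fun p : ℝ × ℝ => rexp ((-(1/4)) * p.2 ^ 2) := by ext p; ring_nf
        have hIv : Integrable (fun p : ℝ × ℝ => rexp ((1/4) * (-(p.2 ^ 2)))) stdBivNormal := by
          rw [heq]
          exact ccb_bivSndInt (fun z => rexp ((-(1/4)) * z ^ 2))
            (Real.continuous_exp.comp (continuous_const.mul (continuous_pow 2))) hgauss14.2
        have hMv : (∫ p, rexp ((1/4) * (-(p.2 ^ 2))) ∂stdBivNormal) ≤ (√(3/2 : ℝ))⁻¹ := by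
          rw [heq]
          rw [ccb_bivSndVal (fun z => rexp ((-(1/4)) * z ^ 2))
            (Real.continuous_exp.comp (continuous_const.mul (continuous_pow 2)))]
          rw [hgauss14.1, hval32]
        have h5 := key (fun p => -(p.2 ^ 2)) hfc (1/4) ((√(3/2 : ℝ))⁻¹)
          (-(R.card : ℝ)/2) (by norm_num) hc32 hIv hMv
        exact le_trans h5 (by
          rw [show -(1/4 : ℝ) * (-(R.card : ℝ)/2) = (-(1/4)) * (-(R.card : ℝ)/2) by norm_num]
          exact hchiBound)
      -- event inclusion
      have hincl : {ω | x ≤ |r' ω|} ⊆ {ω | (R.card : ℝ) * x / 2 ≤ |S ω|}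
          ∪ ({ω | -(R.card : ℝ)/2 ≤ ∑ i : {j // j ∈ R}, -((g i ω).1 ^ 2)}
            ∪ {ω | -(R.card : ℝ)/2 ≤ ∑ i : {j // j ∈ R}, -((g i ω).2 ^ 2)}) := by
        intro ω hω
        have hω' : x ≤ |r' ω| := hω
        by_cases hcx : -(R.card : ℝ)/2 ≤ ∑ i : {j // j ∈ R}, -((g i ω).1 ^ 2)
        · exact Or.inr (Or.inl hcx)
        by_cases hcy : -(R.card : ℝ)/2 ≤ ∑ i : {j // j ∈ R}, -((g i ω).2 ^ 2)
        · exact Or.inr (Or.inr hcy)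
        left
        push_neg at hcx hcy
        rw [Finset.sum_neg_distrib] at hcx hcy
        have hQxl : (R.card : ℝ)/2 < Qx ω := by
          rw [hQxdef]; simp only; linarith
        have hQyl : (R.card : ℝ)/2 < Qy ω := by
          rw [hQydef]; simp only; linarith
        have hQxy : ((R.card : ℝ)/2) ^ 2 ≤ Qx ω * Qy ω := by nlinarith
        have hsqrt : (R.card : ℝ)/2 ≤ Real.sqrt (Qx ω * Qy ω) := by
          have h6 := Real.sqrt_le_sqrt hQxy
          rwa [Real.sqrt_sq (div_nonneg (Nat.cast_nonneg _) (by norm_num))] at h6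
        have hpos : 0 < Real.sqrt (Qx ω * Qy ω) := by
          calc (0:ℝ) < (R.card : ℝ)/2 := by
                exact div_pos hn_pos (by norm_num)
            _ ≤ _ := hsqrt
        have hrabs : |S ω| = |r' ω| * Real.sqrt (Qx ω * Qy ω) := by
          rw [hr'def]
          simp only
          rw [abs_div, abs_of_nonneg (Real.sqrt_nonneg _), div_mul_cancel₀ _ hpos.ne']
        show (R.card : ℝ) * x / 2 ≤ |S ω|
        rw [hrabs]
        calc (R.card : ℝ) * x / 2 = x * ((R.card : ℝ)/2) := by ring
          _ ≤ x * Real.sqrt (Qx ω * Qy ω) := by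
              exact mul_le_mul_of_nonneg_left hsqrt hx.le
          _ ≤ |r' ω| * Real.sqrt (Qx ω * Qy ω) :=
              mul_le_mul_of_nonneg_right hω' (Real.sqrt_nonneg _)
      -- transfer pearson to r'
      have hsetae : {ω | x ≤ |pearsonR0 R (fun i => X i ω) (fun i => Y i ω)|}
          =ᵐ[P] {ω | x ≤ |r' ω|} := by
        filter_upwards [hall] with ω hω
        show (x ≤ |pearsonR0 R (fun i => X i ω) (fun i => Y i ω)|) = (x ≤ |r' ω|)
        have hqx : (∑ i ∈ R, X i ω ^ 2) = Qx ω := by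
          show (∑ i ∈ R, X i ω ^ 2) = ∑ i : {j // j ∈ R}, (g i ω).1 ^ 2
          rw [← Finset.sum_attach R (fun j => X j ω ^ 2), ← Finset.univ_eq_attach]
          exact Finset.sum_congr rfl fun i _ => by rw [← hω i]
        have hqy : (∑ i ∈ R, Y i ω ^ 2) = Qy ω := by
          show (∑ i ∈ R, Y i ω ^ 2) = ∑ i : {j // j ∈ R}, (g i ω).2 ^ 2
          rw [← Finset.sum_attach R (fun j => Y j ω ^ 2), ← Finset.univ_eq_attach]
          exact Finset.sum_congr rfl fun i _ => by rw [← hω i]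
        have h7 : pearsonR0 R (fun i => X i ω) (fun i => Y i ω) = r' ω := by
          unfold pearsonR0
          rw [hsum_eq ω hω, hqx, hqy]
        rw [h7]
      rw [measure_congr hsetae]
      have hfinal : rexp (-(R.card : ℝ) * x ^ 2 / 64) = rexp (-u) := by
        rw [hu']; congr 1; ring
      rw [hfinal]
      calc (P {ω | x ≤ |r' ω|}).toReal
          ≤ (P ({ω | (R.card : ℝ) * x / 2 ≤ |S ω|}
              ∪ ({ω | -(R.card : ℝ)/2 ≤ ∑ i : {j // j ∈ R}, -((g i ω).1 ^ 2)}
                ∪ {ω | -(R.card : ℝ)/2 ≤ ∑ i : {j // j ∈ R}, -((g i ω).2 ^ 2)}))).toReal :=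
            ENNReal.toReal_mono (measure_ne_top _ _) (measure_mono hincl)
        _ ≤ (P {ω | (R.card : ℝ) * x / 2 ≤ |S ω|}).toReal
            + (P ({ω | -(R.card : ℝ)/2 ≤ ∑ i : {j // j ∈ R}, -((g i ω).1 ^ 2)}
                ∪ {ω | -(R.card : ℝ)/2 ≤ ∑ i : {j // j ∈ R}, -((g i ω).2 ^ 2)})).toReal :=
            union2 _ _
        _ ≤ (P {ω | (R.card : ℝ) * x / 2 ≤ |S ω|}).toReal
            + ((P {ω | -(R.card : ℝ)/2 ≤ ∑ i : {j // j ∈ R}, -((g i ω).1 ^ 2)}).toReal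
              + (P {ω | -(R.card : ℝ)/2 ≤ ∑ i : {j // j ∈ R}, -((g i ω).2 ^ 2)}).toReal) := by
            have := union2 {ω | -(R.card : ℝ)/2 ≤ ∑ i : {j // j ∈ R}, -((g i ω).1 ^ 2)}
              {ω | -(R.card : ℝ)/2 ≤ ∑ i : {j // j ∈ R}, -((g i ω).2 ^ 2)}
            linarith
        _ ≤ 2 * rexp (-u) + (rexp (-u) + rexp (-u)) := by
            have := hA; have := hBx; have := hBy; linarith
        _ ≤ 6 * rexp (-u) := by
            have := Real.exp_pos (-u); linarith
    · -- x > 1 : the event is empty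
      push_neg at hx1
      have hempty : {ω | x ≤ |pearsonR0 R (fun i => X i ω) (fun i => Y i ω)|} = ∅ := by
        ext ω
        simp only [Set.mem_setOf_eq, Set.mem_empty_iff_false, iff_false, not_le]
        exact lt_of_le_of_lt (ccb_abs_pearson_le_one R _ _) hx1
      rw [hempty]
      simp only [measure_empty, ENNReal.toReal_zero]
      positivity
end
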